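/- Let p ∈ (0,1], q ∈ (0,1), r > 0, and define for s ≥ 0 the coverage probability P(s) = (1/(1 - p·q))·exp(-s·p·(r + q)) - (p·q + p·r)/((1 - p·q)·(p·r + 1))·exp(-s·(p·r + 1)). Then P is strictly decreasing in s on (0, ∞). -/

import Mathlib

open Real Set

theorem coverage_strictAnti_in_nearfield_intensity
    (p q r : ℝ) (hp : p ∈ Set.Ioc (0:ℝ) 1) (hq : q ∈ Set.Ioo (0:ℝ) 1) (hr : 0 < r) :
    StrictAntiOn
      (fun s : ℝ =>
        (1 / (1 - p * q)) * Real.exp (-s * p * (r + q)) -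
          (p * q + p * r) / ((1 - p * q) * (p * r + 1)) * Real.exp (-s * (p * r + 1)))
      (Set.Ioi (0:ℝ)) := by
  obtain ⟨hp0, hp1⟩ := hp
  obtain ⟨hq0, hq1⟩ := hq
  have hpq : p * q < 1 := by nlinarith
  have h1 : 0 < 1 - p * q := by linarith
  have h2 : 0 < p * r + 1 := by nlinarith
  apply strictAntiOn_of_deriv_neg (convex_Ioi 0)
  · fun_prop
  · intro s hs
    rw [interior_Ioi] at hs
    have hd1 : HasDerivAt (fun s : ℝ => Real.exp (-s * p * (r + q)))
        (-(p * (r + q)) * Real.exp (-s * p * (r + q))) s := by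
      have := (Real.hasDerivAt_exp (-s * p * (r + q))).comp s
        (((hasDerivAt_id s).neg.mul_const p).mul_const (r + q))
      simpa [mul_comm, mul_assoc, mul_left_comm, Function.comp_def] using this
    have hd2 : HasDerivAt (fun s : ℝ => Real.exp (-s * (p * r + 1)))
        (-(p * r + 1) * Real.exp (-s * (p * r + 1))) s := by
      have := (Real.hasDerivAt_exp (-s * (p * r + 1))).comp s
        ((hasDerivAt_id s).neg.mul_const (p * r + 1))
      simpa [mul_comm, mul_assoc, mul_left_comm, Function.comp_def] using this
    have hd : HasDerivAt
        (fun s : ℝ =>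
          (1 / (1 - p * q)) * Real.exp (-s * p * (r + q)) -
            (p * q + p * r) / ((1 - p * q) * (p * r + 1)) * Real.exp (-s * (p * r + 1)))
        ((1 / (1 - p * q)) * (-(p * (r + q)) * Real.exp (-s * p * (r + q))) -
          (p * q + p * r) / ((1 - p * q) * (p * r + 1)) *
            (-(p * r + 1) * Real.exp (-s * (p * r + 1)))) s :=
      (hd1.const_mul _).sub (hd2.const_mul _)
    rw [hd.deriv]
    have he : Real.exp (-s * (p * r + 1)) < Real.exp (-s * p * (r + q)) := by
      apply Real.exp_lt_exp.mpr
      have hs' : 0 < s := hs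
      nlinarith [mul_pos hs' h1]
    have key : (1 / (1 - p * q)) * (-(p * (r + q)) * Real.exp (-s * p * (r + q))) -
          (p * q + p * r) / ((1 - p * q) * (p * r + 1)) *
            (-(p * r + 1) * Real.exp (-s * (p * r + 1)))
        = p * (r + q) / (1 - p * q) *
            (Real.exp (-s * (p * r + 1)) - Real.exp (-s * p * (r + q))) := by
      field_simp
      ring
    rw [key]
    apply mul_neg_of_pos_of_neg
    · positivity
    · linarith
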